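/- Let n₁ = k₁ + 1 with n₁ ≥ 2. There exists a loopless multigraph on n₁ vertices with n₂ edges all of whose k₁-vertex induced subgraphs have at most k₂ edges if and only if n₂ − ⌊2n₂/n₁⌋ ≤ k₂. -/

import Mathlib

open Finset

/-- A loopless multigraph on `n` vertices, given by a symmetric edge-multiplicity
function with zero diagonal. -/
structure Multigraph (n : ℕ) where
  W : Fin n → Fin n → ℕ
  symm : ∀ u v, W u v = W v u
  loopless : ∀ v, W v v = 0

namespace Multigraph

variable {n : ℕ}

/-- Number of edges (with multiplicity) with both endpoints in `S`. -/
def edgesIn (G : Multigraph n) (S : Finset (Fin n)) : ℕ :=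
  ∑ u ∈ S, ∑ v ∈ S.filter (fun v => u < v), G.W u v

/-- Total number of edges (with multiplicity). -/
def edgeCount (G : Multigraph n) : ℕ := G.edgesIn Finset.univ

/-- Degree of a vertex: the number of edge-endpoints at `v`, with multiplicity. -/
def degree (G : Multigraph n) (v : Fin n) : ℕ := ∑ u, G.W v u

/-- A multigraph is almost regular if any two degrees differ by at most one. -/
def AlmostRegular (G : Multigraph n) : Prop :=
  ∀ u v, G.degree u ≤ G.degree v + 1

/-- The underlying simple graph (adjacency = at least one edge). -/
def toSimple (G : Multigraph n) : SimpleGraph (Fin n) where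
  Adj u v := u ≠ v ∧ 0 < G.W u v
  symm := by
    constructor
    intro u v h
    refine ⟨h.1.symm, ?_⟩
    rw [G.symm v u]
    exact h.2
  loopless := by
    constructor
    intro v h
    exact h.1 rfl

end Multigraph

/-- Number of edges of a simple graph with both endpoints in `S`. -/
noncomputable def SimpleGraph.edgesIn {V : Type*} (G : SimpleGraph V) (S : Finset V) : ℕ :=
  {e ∈ G.edgeSet | ∀ x ∈ e, x ∈ S}.ncard

namespace Multigraph

variable {n : ℕ}

lemma double_sum (G : Multigraph n) (S : Finset (Fin n)) :
    ∑ u ∈ S, ∑ v ∈ S, G.W u v = 2 * G.edgesIn S := by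
  have key : ∑ u ∈ S, ∑ v ∈ S, G.W u v
      = (∑ u ∈ S, ∑ v ∈ S, if u < v then G.W u v else 0)
      + ∑ u ∈ S, ∑ v ∈ S, if v < u then G.W u v else 0 := by
    rw [← Finset.sum_add_distrib]
    refine Finset.sum_congr rfl fun u _ => ?_
    rw [← Finset.sum_add_distrib]
    refine Finset.sum_congr rfl fun v _ => ?_
    rcases lt_trichotomy u v with hlt | heq | hgt
    · simp [hlt, not_lt_of_gt hlt]
    · subst heq; simp [G.loopless]
    · simp [hgt, not_lt_of_gt hgt]
  have h2 : (∑ u ∈ S, ∑ v ∈ S, if v < u then G.W u v else 0)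
      = ∑ u ∈ S, ∑ v ∈ S, if u < v then G.W u v else 0 := by
    rw [Finset.sum_comm]
    refine Finset.sum_congr rfl fun u _ => Finset.sum_congr rfl fun v _ => ?_
    split_ifs
    · exact G.symm v u
    · rfl
  rw [key, h2, edgesIn, two_mul]
  congr 1 <;> exact Finset.sum_congr rfl fun u _ => (Finset.sum_filter _ _).symm

lemma sum_degree (G : Multigraph n) : ∑ v, G.degree v = 2 * G.edgeCount := by
  rw [edgeCount, ← G.double_sum]
  rfl

lemma edgesIn_erase (G : Multigraph n) (v : Fin n) :
    G.edgesIn (univ.erase v) + G.degree v = G.edgeCount := by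
  have h1 := G.double_sum (univ.erase v)
  have h2 := G.double_sum (univ : Finset (Fin n))
  have hv : v ∈ (univ : Finset (Fin n)) := mem_univ v
  have e3 : ∑ u ∈ univ.erase v, G.W u v = G.degree v := by
    have hh : ∑ u ∈ univ.erase v, G.W u v = ∑ u ∈ univ.erase v, G.W v u :=
      Finset.sum_congr rfl fun u _ => G.symm u v
    rw [hh, Finset.sum_erase _ (G.loopless v)]
    rfl
  have key : ∑ u ∈ (univ : Finset (Fin n)), ∑ w ∈ (univ : Finset (Fin n)), G.W u w
      = G.degree v + (G.degree v + ∑ u ∈ univ.erase v, ∑ w ∈ univ.erase v, G.W u w) := by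
    rw [← Finset.add_sum_erase _ _ hv]
    congr 1
    have : ∀ u, ∑ w ∈ (univ : Finset (Fin n)), G.W u w
        = G.W u v + ∑ w ∈ univ.erase v, G.W u w := fun u =>
      (Finset.add_sum_erase _ _ hv).symm
    rw [Finset.sum_congr rfl fun u _ => this u, Finset.sum_add_distrib, e3]
  rw [key] at h2
  show G.edgesIn (univ.erase v) + G.degree v = G.edgesIn univ
  omega

end Multigraph

private lemma div_add_div_le' (a b c : ℕ) : a / c + b / c ≤ (a + b) / c := by
  rcases Nat.eq_zero_or_pos c with hc | hc
  · simp [hc]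
  · rw [Nat.le_div_iff_mul_le hc, add_mul]
    exact Nat.add_le_add (Nat.div_mul_le_self a c) (Nat.div_mul_le_self b c)

/-- Multiplicity of the `i`-th edge of the balanced cycle. -/
def mw (n₁ n₂ i : ℕ) : ℕ := (i + 1) * n₂ / n₁ - i * n₂ / n₁

/-- The balanced cycle multigraph: `n₂` edges distributed as evenly as possible
around a Hamiltonian cycle on `Fin n₁`. -/
def cyc (n₁ n₂ : ℕ) [NeZero n₁] (h : 2 ≤ n₁) : Multigraph n₁ where
  W u v := (if u + 1 = v then mw n₁ n₂ u.val else 0)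
    + (if v + 1 = u then mw n₁ n₂ v.val else 0)
  symm u v := add_comm _ _
  loopless v := by
    have hne : v + 1 ≠ v := by
      intro hv
      have h1 : (1 : Fin n₁) = 0 := by
        have := add_left_cancel (a := v) (b := 1) (c := 0) (by simpa using hv)
        exact this
      rw [Fin.one_eq_zero_iff] at h1
      omega
    simp [hne]

lemma cyc_degree {n₁ : ℕ} (n₂ : ℕ) [NeZero n₁] (h : 2 ≤ n₁) (v : Fin n₁) :
    (cyc n₁ n₂ h).degree v = mw n₁ n₂ v.val + mw n₁ n₂ (v - 1).val := by
  unfold Multigraph.degree cyc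
  simp only
  rw [Finset.sum_add_distrib]
  congr 1
  · rw [Finset.sum_ite_eq univ (v + 1) (fun _ => mw n₁ n₂ v.val)]
    simp
  · simp only [← eq_sub_iff_add_eq]
    rw [Finset.sum_ite_eq' univ (v - 1) (fun u => mw n₁ n₂ u.val)]
    simp

lemma sum_mw (n₁ n₂ : ℕ) (h : 0 < n₁) : ∑ v : Fin n₁, mw n₁ n₂ v.val = n₂ := by
  rw [Fin.sum_univ_eq_sum_range (fun i => mw n₁ n₂ i)]
  unfold mw
  rw [Finset.sum_range_tsub (f := fun i => i * n₂ / n₁)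
    (fun a b hab => Nat.div_le_div_right (Nat.mul_le_mul_right _ hab))]
  simp [Nat.mul_div_cancel_left _ h]

lemma cyc_edgeCount {n₁ : ℕ} (n₂ : ℕ) [NeZero n₁] (h : 2 ≤ n₁) :
    (cyc n₁ n₂ h).edgeCount = n₂ := by
  have hs := Multigraph.sum_degree (cyc n₁ n₂ h)
  have hd : ∑ v : Fin n₁, (cyc n₁ n₂ h).degree v = 2 * n₂ := by
    simp only [cyc_degree n₂ h]
    rw [Finset.sum_add_distrib, sum_mw n₁ n₂ (by omega), two_mul]
    congr 1
    exact (Fintype.sum_equiv (Equiv.subRight (1 : Fin n₁))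
      (fun v => mw n₁ n₂ (v - 1).val) (fun v => mw n₁ n₂ v.val) (fun v => rfl)).trans
      (sum_mw n₁ n₂ (by omega))
  omega

lemma sub_one_val {n₁ : ℕ} [NeZero n₁] (h : 2 ≤ n₁) (v : Fin n₁) :
    (v - 1).val = if v.val = 0 then n₁ - 1 else v.val - 1 := by
  have h1 : (v - 1).val = (n₁ - (1 : Fin n₁).val + v.val) % n₁ := Fin.coe_sub v 1
  have hone : ((1 : Fin n₁) : ℕ) = 1 := by
    rw [Fin.val_one']; exact Nat.mod_eq_of_lt h
  rw [hone] at h1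
  have hv : v.val < n₁ := v.isLt
  by_cases h0 : v.val = 0
  · rw [h1, h0, if_pos rfl, add_zero, Nat.mod_eq_of_lt (by omega)]
  · rw [h1, if_neg h0]
    have : n₁ - 1 + v.val = n₁ + (v.val - 1) := by omega
    rw [this, Nat.add_mod_left, Nat.mod_eq_of_lt (by omega)]

lemma cyc_degree_ge {n₁ : ℕ} (n₂ : ℕ) [NeZero n₁] (h : 2 ≤ n₁) (v : Fin n₁) :
    2 * n₂ / n₁ ≤ (cyc n₁ n₂ h).degree v := by
  rw [cyc_degree n₂ h, sub_one_val h]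
  by_cases h0 : v.val = 0
  · rw [h0, if_pos rfl]
    unfold mw
    have e1 : n₁ - 1 + 1 = n₁ := by omega
    rw [e1]
    have c1 : n₁ * n₂ / n₁ = n₂ := Nat.mul_div_cancel_left _ (by omega)
    have c2 : (n₁ - 1) * n₂ / n₁ + 2 * n₂ / n₁ ≤ (n₁ * n₂ + n₂) / n₁ := by
      have := div_add_div_le' ((n₁ - 1) * n₂) (2 * n₂) n₁
      have e2 : (n₁ - 1) * n₂ + 2 * n₂ = n₁ * n₂ + n₂ := by
        have : n₁ - 1 + 2 = n₁ + 1 := by omega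
        calc (n₁ - 1) * n₂ + 2 * n₂ = (n₁ - 1 + 2) * n₂ := by ring
          _ = (n₁ + 1) * n₂ := by rw [this]
          _ = n₁ * n₂ + n₂ := by ring
      rwa [e2] at this
    have c3 : (n₁ * n₂ + n₂) / n₁ = n₂ + n₂ / n₁ := Nat.mul_add_div (by omega) n₂ n₂
    have c4 : (n₁ - 1) * n₂ / n₁ ≤ n₂ := by
      calc (n₁ - 1) * n₂ / n₁ ≤ n₁ * n₂ / n₁ :=
            Nat.div_le_div_right (Nat.mul_le_mul_right _ (by omega))
        _ = n₂ := c1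
    have c5 : (0 : ℕ) * n₂ / n₁ = 0 := by simp
    have c6 : (0 + 1) * n₂ / n₁ = n₂ / n₁ := by norm_num
    omega
  · rw [if_neg h0]
    set a := v.val with ha
    have ha1 : 1 ≤ a := by omega
    unfold mw
    have e1 : a - 1 + 1 = a := by omega
    rw [e1]
    have k1 : (a - 1) * n₂ / n₁ + 2 * n₂ / n₁ ≤ (a + 1) * n₂ / n₁ := by
      have := div_add_div_le' ((a - 1) * n₂) (2 * n₂) n₁
      have e2 : (a - 1) * n₂ + 2 * n₂ = (a + 1) * n₂ := by
        have : a - 1 + 2 = a + 1 := by omega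
        calc (a - 1) * n₂ + 2 * n₂ = (a - 1 + 2) * n₂ := by ring
          _ = (a + 1) * n₂ := by rw [this]
      rwa [e2] at this
    have k2 : (a - 1) * n₂ / n₁ ≤ a * n₂ / n₁ :=
      Nat.div_le_div_right (Nat.mul_le_mul_right _ (by omega))
    have k3 : a * n₂ / n₁ ≤ (a + 1) * n₂ / n₁ :=
      Nat.div_le_div_right (Nat.mul_le_mul_right _ (by omega))
    omega

theorem exists_F_free_multigraph_iff_n1_eq_k1_succ (n₁ n₂ k₁ k₂ : ℕ)
    (h : n₁ = k₁ + 1) (hn : 2 ≤ n₁) :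
    (∃ G : Multigraph n₁, G.edgeCount = n₂ ∧
        ∀ S : Finset (Fin n₁), S.card = k₁ → G.edgesIn S ≤ k₂) ↔
      n₂ - 2 * n₂ / n₁ ≤ k₂ := by
  haveI : NeZero n₁ := ⟨by omega⟩
  constructor
  · rintro ⟨G, hGc, hGs⟩
    have hsum := G.sum_degree
    rw [hGc] at hsum
    obtain ⟨v, -, hv⟩ := Finset.exists_min_image (univ : Finset (Fin n₁)) G.degree
      ⟨⟨0, by omega⟩, mem_univ _⟩
    have hle : n₁ * G.degree v ≤ 2 * n₂ := by
      calc n₁ * G.degree v = ∑ _u : Fin n₁, G.degree v := by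
            rw [Finset.sum_const, card_univ, Fintype.card_fin, smul_eq_mul]
        _ ≤ ∑ u, G.degree u := Finset.sum_le_sum fun u _ => hv u (mem_univ u)
        _ = 2 * n₂ := hsum
    have hdv : G.degree v ≤ 2 * n₂ / n₁ :=
      (Nat.le_div_iff_mul_le (by omega)).mpr (by rw [Nat.mul_comm]; exact hle)
    have h3 := G.edgesIn_erase v
    rw [hGc] at h3
    have h4 := hGs (univ.erase v)
      (by rw [card_erase_of_mem (mem_univ v), card_univ, Fintype.card_fin]; omega)
    omega
  · intro hk
    refine ⟨cyc n₁ n₂ hn, cyc_edgeCount n₂ hn, ?_⟩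
    intro S hScard
    have hcompl : Sᶜ.card = 1 := by
      rw [Finset.card_compl, hScard, Fintype.card_fin]; omega
    obtain ⟨v, hv⟩ := Finset.card_eq_one.mp hcompl
    have hS : S = univ.erase v := by
      rw [← compl_compl S, hv, Finset.compl_singleton]
    have h3 := (cyc n₁ n₂ hn).edgesIn_erase v
    rw [cyc_edgeCount n₂ hn] at h3
    have h4 := cyc_degree_ge n₂ hn v
    rw [hS]
    omega
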